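/- For the GHZ-type state |ψ⟩ = (|0ⁿ⟩ + |1ⁿ⟩)/√2 with each party applying the phase |1⟩ ↦ exp(2πi Xᵢ/2^l)|1⟩ and measuring in the basis (|0⟩ ± |1⟩)/√2 (outcome aᵢ ∈ {0,1}), the quantum probability of outcome a given input X with (Σᵢ Xᵢ) mod 2^{l−1} = 0 is nonzero only if (Σᵢ aᵢ) mod 2 = ((Σᵢ Xᵢ) mod 2^l)/2^{l−1}. Equivalently (as a trigonometric identity): (1 + cos(2π Σᵢ Xᵢ/2^l + π Σᵢ aᵢ))/2 = 0 whenever (Σᵢ aᵢ) mod 2 ≠ ((Σᵢ Xᵢ) mod 2^l)/2^{l−1} and 2^{l−1} divides Σᵢ Xᵢ. -/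

import Mathlib

/-- GHZ outcome probabilities: if `2^{l−1} ∣ Σ Xᵢ` and
`(Σ aᵢ) mod 2 ≠ ((Σ Xᵢ) mod 2^l) / 2^{l−1}`, then the quantum probability
`(1 + cos(2π Σ Xᵢ / 2^l + π Σ aᵢ)) / 2` vanishes. -/
theorem stmt9 (n l : ℕ) (hl : 1 ≤ l) (X : Fin n → ℕ) (hX : ∀ i, X i < 2 ^ l)
    (a : Fin n → Fin 2)
    (hdiv : 2 ^ (l - 1) ∣ ∑ i, X i)
    (hne : (∑ i, (a i : ℕ)) % 2 ≠ ((∑ i, X i) % 2 ^ l) / 2 ^ (l - 1)) :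
    (1 + Real.cos (2 * Real.pi * (∑ i, (X i : ℕ)) / 2 ^ l
      + Real.pi * (∑ i, (a i : ℕ)))) / 2 = 0 := by
  obtain ⟨k, hk⟩ := hdiv
  set A : ℕ := ∑ i, (a i : ℕ) with hA
  have h2l : (2:ℕ) ^ l = 2 ^ (l-1) * 2 := by
    rw [← pow_succ]
    congr 1
    omega
  have hmod : ((∑ i, X i) % 2 ^ l) / 2 ^ (l - 1) = k % 2 := by
    rw [hk, h2l, Nat.mul_mod_mul_left, Nat.mul_div_cancel_left _ (by positivity)]
  rw [hmod] at hne
  -- k + A is odd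
  have hodd : (k + A) % 2 = 1 := by omega
  obtain ⟨m, hm⟩ : ∃ m, k + A = 2 * m + 1 := ⟨(k+A)/2, by omega⟩
  have harg : 2 * Real.pi * (∑ i, (X i : ℕ)) / 2 ^ l + Real.pi * A
      = (m : ℝ) * (2 * Real.pi) + Real.pi := by
    rw [hk]
    have h2l' : ((2:ℝ)) ^ l = 2 ^ (l-1) * 2 := by exact_mod_cast h2l
    have hpos : ((2:ℝ)) ^ (l-1) ≠ 0 := by positivity
    have hmR : (k : ℝ) + A = 2 * m + 1 := by exact_mod_cast hm
    push_cast
    rw [h2l']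
    field_simp
    linear_combination hmR
  rw [harg]
  rw [Real.cos_nat_mul_two_pi_add_pi]
  norm_num
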